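/- arXiv:1008.0390 — 2 statements merged into one kernel-verified Lean document; each statement's English description precedes it below -/
import Mathlib

section
/- Fix an integer d ≥ 3 and let the entries of C : [n]^d → ℝ be independent rate-1 exponential random variables. Then with high probability the minimum planar assignment cost satisfies Z_P(n,d) ≥ n^{2−d}/2; that is, P( Z_P(n,d) ≥ n^{2−d}/2 ) → 1 as n → ∞. -/
open MeasureTheory ProbabilityTheory Filter Finset
open scoped ENNReal

section AuxPlanar

open Real Set

variable {Ω' : Type*} [MeasurableSpace Ω'] {μ : Measure Ω'}

private lemma myIntExp {b : ℝ} (hb : 0 < b) : ∫ x in Ioi (0:ℝ), Real.exp (-(b*x)) = b⁻¹ := by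
  have hderiv : ∀ x ∈ Ioi (0:ℝ), HasDerivAt (fun x : ℝ => -b⁻¹ * Real.exp (-(b*x)))
      (Real.exp (-(b*x))) x := by
    intro x _
    have h1 : HasDerivAt (fun x : ℝ => -(b*x)) (-b) x := by
      simpa using ((hasDerivAt_id x).const_mul (-b))
    have h2 := (h1.exp).const_mul (-b⁻¹)
    refine h2.congr_deriv ?_
    have hbb : b⁻¹ * b = 1 := inv_mul_cancel₀ hb.ne'
    linear_combination (Real.exp (-(b*x))) * hbb
  have hb' : Tendsto (fun x : ℝ => b * x) atTop atTop := tendsto_id.const_mul_atTop hb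
  have hbn : Tendsto (fun x : ℝ => -(b * x)) atTop atBot := tendsto_neg_atBot_iff.mpr hb'
  have h3 : Tendsto (fun x : ℝ => Real.exp (-(b*x))) atTop (nhds 0) :=
    Real.tendsto_exp_atBot.comp hbn
  have htend : Tendsto (fun x : ℝ => -b⁻¹ * Real.exp (-(b*x))) atTop (nhds 0) := by
    have := h3.const_mul (-b⁻¹)
    simpa using this
  have hcont : ContinuousWithinAt (fun x : ℝ => -b⁻¹ * Real.exp (-(b*x))) (Ici 0) 0 :=
    Continuous.continuousWithinAt (by fun_prop)
  have hint : IntegrableOn (fun x : ℝ => Real.exp (-(b*x))) (Ioi 0) := by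
    simpa [neg_mul] using exp_neg_integrableOn_Ioi (0:ℝ) hb
  have key := integral_Ioi_of_hasDerivAt_of_tendsto hcont hderiv hint htend
  rw [key]
  simp

private lemma expNonnegAE [IsProbabilityMeasure μ] {X : Ω' → ℝ} (hX : Measurable X)
    (hmap : Measure.map X μ = expMeasure 1) : ∀ᵐ ω ∂μ, 0 ≤ X ω := by
  have h0 : expMeasure 1 (Iio 0) = 0 := by
    show (volume.withDensity (gammaPDF 1 1)) (Iio 0) = 0
    rw [withDensity_apply _ measurableSet_Iio]
    exact lintegral_gammaPDF_of_nonpos le_rfl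
  have : μ (X ⁻¹' (Iio 0)) = 0 := by
    rw [← Measure.map_apply hX measurableSet_Iio, hmap, h0]
  have h2 : ∀ᵐ ω ∂μ, X ω ∉ Iio (0:ℝ) := (ae_iff).2 (by simpa [Set.preimage] using this)
  filter_upwards [h2] with ω h
  simpa using h

lemma expIntegrable [IsProbabilityMeasure μ] {X : Ω' → ℝ} (hX : Measurable X)
    (hmap : Measure.map X μ = expMeasure 1) {s : ℝ} (hs : s ≤ 0) :
    Integrable (fun ω => Real.exp (s * X ω)) μ := by
  refine Integrable.mono' (integrable_const 1) ((hX.const_mul s).exp.aestronglyMeasurable) ?_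
  filter_upwards [expNonnegAE hX hmap] with ω h
  rw [Real.norm_eq_abs, abs_of_pos (Real.exp_pos _)]
  exact Real.exp_le_one_iff.2 (mul_nonpos_of_nonpos_of_nonneg hs h)

lemma expMgf [IsProbabilityMeasure μ] {X : Ω' → ℝ} (hX : Measurable X)
    (hmap : Measure.map X μ = expMeasure 1) {s : ℝ} (hs : s ≤ 0) :
    mgf X μ s = (1 - s)⁻¹ := by
  have h1s : (0:ℝ) < 1 - s := by linarith
  have hmeas : Measurable fun x : ℝ => Real.exp (s * x) := (measurable_id.const_mul s).exp
  have step1 : mgf X μ s = ∫ x, Real.exp (s * x) ∂(expMeasure 1) := by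
    rw [mgf, ← hmap, integral_map hX.aemeasurable hmeas.aestronglyMeasurable]
  rw [step1]
  -- expMeasure 1 = volume.withDensity (gammaPDF 1 1)
  have hpdf : Measurable (gammaPDF 1 1) := measurable_gammaPDFReal 1 1 |>.ennreal_ofReal
  have hnn : 0 ≤ᵐ[expMeasure 1] fun x : ℝ => Real.exp (s * x) :=
    ae_of_all _ fun x => (Real.exp_pos _).le
  rw [integral_eq_lintegral_of_nonneg_ae hnn hmeas.aestronglyMeasurable]
  have hli : ∫⁻ x, ENNReal.ofReal (Real.exp (s * x)) ∂(expMeasure 1)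
      = ∫⁻ x, (gammaPDF 1 1 x) * ENNReal.ofReal (Real.exp (s * x)) := by
    rw [show expMeasure 1 = volume.withDensity (gammaPDF 1 1) from rfl,
      lintegral_withDensity_eq_lintegral_mul volume hpdf (hmeas.ennreal_ofReal)]
    rfl
  rw [hli]
  have hfun : ∀ x : ℝ, (gammaPDF 1 1 x) * ENNReal.ofReal (Real.exp (s * x))
      = ENNReal.ofReal (Set.indicator (Ici 0) (fun x => Real.exp (-((1-s) * x))) x) := by
    intro x
    rw [gammaPDF_eq]
    by_cases hx : 0 ≤ x
    · rw [if_pos hx, Set.indicator_of_mem (Set.mem_Ici.mpr hx),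
        ← ENNReal.ofReal_mul (by positivity)]
      congr 1
      simp only [Real.Gamma_one, sub_self, Real.rpow_zero, Real.one_rpow, one_pow, div_one, one_mul, mul_one]
      rw [← Real.exp_add]
      congr 1
      ring
    · rw [if_neg hx, Set.indicator_of_notMem (by simpa using hx)]
      simp
  simp_rw [hfun]
  have hIntOn : IntegrableOn (fun x : ℝ => Real.exp (-((1-s) * x))) (Ici 0) := by
    rw [integrableOn_Ici_iff_integrableOn_Ioi]
    have heq : (fun x : ℝ => Real.exp (-((1-s)*x))) = fun x : ℝ => Real.exp (-(1-s)*x) := by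
      funext x; ring_nf
    rw [heq]
    exact exp_neg_integrableOn_Ioi (0:ℝ) h1s
  have hInd : Integrable (Set.indicator (Ici 0) (fun x : ℝ => Real.exp (-((1-s) * x)))) := by
    rw [integrable_indicator_iff measurableSet_Ici]
    exact hIntOn
  rw [← ofReal_integral_eq_lintegral_ofReal hInd
    (ae_of_all _ (Set.indicator_nonneg (fun x _ => (Real.exp_pos _).le))),
    ENNReal.toReal_ofReal (integral_nonneg (Set.indicator_nonneg (fun x _ => (Real.exp_pos _).le)))]
  rw [integral_indicator measurableSet_Ici, integral_Ici_eq_integral_Ioi, myIntExp h1s]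

private lemma iIndepFun_precomp {Ω' ι ι' : Type*} [MeasurableSpace Ω'] {μ : Measure Ω'}
    {f : ι → Ω' → ℝ} (hf : iIndepFun f μ)
    {g : ι' → ι} (hg : Function.Injective g) :
    iIndepFun (fun i => f (g i)) μ := by
  classical
  rw [iIndepFun_iff_measure_inter_preimage_eq_mul] at hf ⊢
  intro S sets hsets
  set sets' : ι → Set ℝ := fun j =>
    if h : ∃ i ∈ S, g i = j then sets h.choose else Set.univ with hsets'def
  have hchoice : ∀ j (h : ∃ i ∈ S, g i = j), h.choose ∈ S ∧ g h.choose = j := fun j h => h.choose_spec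
  have key : ∀ i ∈ S, sets' (g i) = sets i := by
    intro i hi
    have h : ∃ i' ∈ S, g i' = g i := ⟨i, hi, rfl⟩
    have hc := hchoice _ h
    simp only [hsets'def, dif_pos h]
    rw [hg hc.2]
  have hmeas' : ∀ j ∈ S.image g, MeasurableSet (sets' j) := by
    intro j hj
    obtain ⟨i, hi, rfl⟩ := Finset.mem_image.1 hj
    rw [key i hi]
    exact hsets i hi
  calc μ (⋂ i ∈ S, f (g i) ⁻¹' sets i)
      = μ (⋂ j ∈ S.image g, f j ⁻¹' sets' j) := by
        rw [Finset.set_biInter_finset_image]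
        congr 1
        exact (Set.iInter₂_congr fun i hi => by rw [key i hi]).symm
    _ = ∏ j ∈ S.image g, μ (f j ⁻¹' sets' j) := hf _ hmeas'
    _ = ∏ i ∈ S, μ (f (g i) ⁻¹' sets' (g i)) := Finset.prod_image (fun a _ b _ h => hg h)
    _ = ∏ i ∈ S, μ (f (g i) ⁻¹' sets i) := Finset.prod_congr rfl (fun i hi => by rw [key i hi])

private lemma factBound (n : ℕ) (hn : 1 ≤ n) : (n.factorial : ℝ) * 2^(n-1) ≤ (n:ℝ)^n := by
  induction n, hn using Nat.le_induction with
  | base => norm_num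
  | succ n hn ih =>
    have hN : (0:ℝ) < n := by exact_mod_cast hn
    have key : 2 * (n:ℝ)^n ≤ ((n:ℝ)+1)^n := by
      have h := one_add_mul_le_pow (a := (n:ℝ)⁻¹)
        (le_trans (by norm_num : (-2:ℝ) ≤ 0) (by positivity)) n
      have h2 : (2:ℝ) ≤ (1 + (n:ℝ)⁻¹)^n := by
        have hc : (n:ℝ) * (n:ℝ)⁻¹ = 1 := mul_inv_cancel₀ hN.ne'
        linarith
      have h3 : ((1:ℝ) + (n:ℝ)⁻¹)^n * (n:ℝ)^n = ((n:ℝ)+1)^n := by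
        rw [← mul_pow]
        congr 1
        field_simp
      nlinarith [pow_pos hN n, h2]
    have h1 : ((n+1).factorial : ℝ) = ((n:ℝ)+1) * n.factorial := by
      rw [Nat.factorial_succ]; push_cast; ring
    have h2 : (2:ℝ)^(n+1-1) = 2^(n-1) * 2 := by
      obtain ⟨m, rfl⟩ := Nat.exists_eq_add_of_le hn
      simp [pow_succ]
      ring_nf
    have ihn := ih
    calc ((n+1).factorial : ℝ) * 2^(n+1-1)
        = ((n:ℝ)+1) * ((n.factorial:ℝ) * 2^(n-1)) * 2 := by rw [h1, h2]; ring
      _ ≤ ((n:ℝ)+1) * (n:ℝ)^n * 2 := by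
          have : (0:ℝ) ≤ (n:ℝ)+1 := by positivity
          nlinarith [ihn]
      _ = ((n:ℝ)+1) * (2 * (n:ℝ)^n) := by ring
      _ ≤ ((n:ℝ)+1) * ((n:ℝ)+1)^n := by
          have : (0:ℝ) ≤ (n:ℝ)+1 := by positivity
          exact mul_le_mul_of_nonneg_left key this
      _ = ((n:ℝ)+1)^(n+1) := by rw [pow_succ]; ring
      _ = ((n+1:ℕ):ℝ)^(n+1) := by push_cast; ring
    
lemma twoMulPow (n : ℕ) (hn : 1 ≤ n) : (((2:ℝ)^(n-1))^2 * 2^n) = 8^n / 4 := by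
  obtain ⟨m, rfl⟩ := Nat.exists_eq_add_of_le hn
  have h8 : (8:ℝ)^(1+m) = 2^(3*(1+m)) := by
    rw [show (8:ℝ) = 2^3 by norm_num, ← pow_mul]
  rw [h8]
  simp only [Nat.add_sub_cancel_left]
  rw [← pow_mul, ← pow_add, eq_div_iff (by norm_num)]
  rw [show (4:ℝ) = 2^2 by norm_num, ← pow_add]
  congr 1
  ring

private lemma bBound (d n : ℕ) (hd : 3 ≤ d) (hn : 1 ≤ n) :
    ((n.factorial : ℝ))^(d-1) * Real.exp n * ((2 * (n:ℝ)^(d-1))⁻¹)^n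
      ≤ 4 * (Real.exp 1 / 8)^n := by
  have hN : (0:ℝ) < n := by exact_mod_cast hn
  have h2p : (0:ℝ) < 2^(n-1) := by positivity
  have hF : (n.factorial:ℝ) ≤ (n:ℝ)^n / 2^(n-1) := by
    rw [le_div_iff₀ h2p]; exact factBound n hn
  have step1 : ((n.factorial : ℝ))^(d-1) * Real.exp n * ((2 * (n:ℝ)^(d-1))⁻¹)^n
      ≤ ((n:ℝ)^n / 2^(n-1))^(d-1) * Real.exp n * ((2 * (n:ℝ)^(d-1))⁻¹)^n := by
    gcongr
  have hcomm : (((n:ℝ)^(d-1))^n) = ((n:ℝ)^n)^(d-1) := by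
    rw [← pow_mul, ← pow_mul, Nat.mul_comm]
  have step2 : ((n:ℝ)^n / 2^(n-1))^(d-1) * Real.exp n * ((2 * (n:ℝ)^(d-1))⁻¹)^n
      = Real.exp n * (((2:ℝ)^(n-1))^(d-1) * 2^n)⁻¹ := by
    rw [div_pow, mul_inv, mul_pow, ← hcomm]
    field_simp
    ring_nf
    rw [← mul_pow, mul_inv_cancel₀ hN.ne', one_pow, one_mul, ← mul_pow]
    norm_num
  have hmono : ((2:ℝ)^(n-1))^2 * 2^n ≤ ((2:ℝ)^(n-1))^(d-1) * 2^n := by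
    gcongr
    · exact one_le_pow₀ (by norm_num)
    · omega
  have step3 : Real.exp n * (((2:ℝ)^(n-1))^(d-1) * 2^n)⁻¹
      ≤ Real.exp n * (((2:ℝ)^(n-1))^2 * 2^n)⁻¹ := by
    gcongr
  have step4 : Real.exp n * (((2:ℝ)^(n-1))^2 * 2^n)⁻¹ = 4 * (Real.exp 1 / 8)^n := by
    rw [twoMulPow n hn, div_pow,
      show ((n:ℝ)) = ((n:ℕ):ℝ)*1 by ring, Real.exp_nat_mul]
    field_simp
  exact step1.trans (step2.le.trans (step3.trans step4.le))

private lemma chernoffStep (d : ℕ) (hd : 3 ≤ d) {Ω' : Type*} [MeasurableSpace Ω'] (μ : Measure Ω')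
    [IsProbabilityMeasure μ] (n : ℕ) (hn : 1 ≤ n)
    (C : (Fin d → Fin n) → Ω' → ℝ)
    (hCmeas : ∀ v, Measurable (C v))
    (hCindep : iIndepFun C μ)
    (hCexp : ∀ v, Measure.map (C v) μ = expMeasure 1)
    (pp : Fin d → Equiv.Perm (Fin n)) :
    μ {ω | ∑ i : Fin n, C (fun t : Fin d => if t = (⟨0, by omega⟩ : Fin d) then i else pp t i) ω
        ≤ (n : ℝ) ^ ((2 : ℤ) - d) / 2}
      ≤ ENNReal.ofReal (Real.exp n * ((2 * (n:ℝ)^(d-1))⁻¹)^n) := by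
  have hN : (0:ℝ) < n := by exact_mod_cast hn
  set z : Fin d := ⟨0, by omega⟩ with hz
  set v : Fin n → (Fin d → Fin n) := fun i t => if t = z then i else pp t i with hv
  have hvinj : Function.Injective v := by
    intro i j h
    have := congrFun h z
    simpa [hv] using this
  set X : Fin n → Ω' → ℝ := fun i => C (v i) with hX
  have hXmeas : ∀ i, Measurable (X i) := fun i => hCmeas (v i)
  have hXindep : iIndepFun X μ := iIndepFun_precomp hCindep hvinj
  set s : ℝ := 1 - 2 * (n:ℝ)^(d-1) with hsdef
  have hpow1 : (1:ℝ) ≤ (n:ℝ)^(d-1) := one_le_pow₀ (by exact_mod_cast hn)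
  have hs : s ≤ 0 := by simp only [hsdef]; linarith
  have hint : ∀ i, Integrable (fun ω => Real.exp (s * X i ω)) μ :=
    fun i => expIntegrable (hXmeas i) (hCexp (v i)) hs
  have hintS : Integrable (fun ω => Real.exp (s * (∑ i : Fin n, X i) ω)) μ :=
    iIndepFun.integrable_exp_mul_sum hXindep hXmeas (fun i _ => hint i)
  set ε : ℝ := (n : ℝ) ^ ((2 : ℤ) - d) / 2 with hε
  have chern := measure_le_le_exp_mul_mgf (μ := μ) (X := ∑ i : Fin n, X i) ε hs hintS
  have hmgf : mgf (∑ i : Fin n, X i) μ s = ((2 * (n:ℝ)^(d-1))⁻¹)^n := by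
    rw [iIndepFun.mgf_sum hXindep hXmeas Finset.univ]
    have : ∀ i : Fin n, mgf (X i) μ s = (2 * (n:ℝ)^(d-1))⁻¹ := by
      intro i
      rw [expMgf (hXmeas i) (hCexp (v i)) hs]
      congr 1
      simp only [hsdef]; ring
    rw [Finset.prod_congr rfl (fun i _ => this i), Finset.prod_const, Finset.card_univ,
      Fintype.card_fin]
  have hzpow : (n:ℝ)^(d-1) * (n : ℝ) ^ ((2 : ℤ) - d) = (n:ℝ) := by
    rw [show ((n:ℝ)^(d-1) : ℝ) = (n:ℝ)^((d-1 : ℕ) : ℤ) from (zpow_natCast _ _).symm,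
      ← zpow_add₀ hN.ne']
    rw [show ((d-1 : ℕ) : ℤ) + ((2:ℤ) - d) = 1 by push_cast; omega]
    simp
  have hεnn : 0 ≤ ε := by
    simp only [hε]
    positivity
  have hexp : Real.exp (-s * ε) ≤ Real.exp n := by
    apply Real.exp_le_exp.2
    have : -s * ε ≤ 2 * (n:ℝ)^(d-1) * ε := by
      simp only [hsdef]
      nlinarith
    refine this.trans ?_
    rw [hε]
    rw [show 2 * (n:ℝ)^(d-1) * ((n : ℝ) ^ ((2 : ℤ) - d) / 2) = (n:ℝ)^(d-1) * (n : ℝ) ^ ((2 : ℤ) - d) by ring, hzpow]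
  have hfinal : (μ {ω | (∑ i : Fin n, X i) ω ≤ ε}).toReal
      ≤ Real.exp n * ((2 * (n:ℝ)^(d-1))⁻¹)^n := by
    refine chern.trans ?_
    rw [hmgf]
    gcongr
  have hsets : {ω | ∑ i : Fin n, C (fun t : Fin d => if t = (⟨0, by omega⟩ : Fin d) then i else pp t i) ω
        ≤ (n : ℝ) ^ ((2 : ℤ) - d) / 2} = {ω | (∑ i : Fin n, X i) ω ≤ ε} := by
    ext ω
    simp [hX, hv, hε, hz]
  rw [hsets]
  exact (ENNReal.le_ofReal_iff_toReal_le (measure_ne_top _ _) (by positivity)).2 hfinal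

end AuxPlanar

/-- for `d ≥ 3` and iid Exp(1) entries, whp the minimum planar assignment
cost satisfies `Z_P(n,d) ≥ n^{2-d}/2`, i.e. whp every planar assignment has cost at least
`n^{2-d}/2`. -/
theorem planar_assignment_lower_bound_whp
    (d : ℕ) (hd : 3 ≤ d)
    (Ω : ℕ → Type*) (mΩ : ∀ n, MeasurableSpace (Ω n))
    (μ : ∀ n, Measure (Ω n)) (hμ : ∀ n, IsProbabilityMeasure (μ n))
    (C : ∀ n, (Fin d → Fin n) → Ω n → ℝ)
    (hCmeas : ∀ n v, Measurable (C n v))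
    (hCindep : ∀ n, iIndepFun (C n) (μ n))
    (hCexp : ∀ n v, Measure.map (C n v) (μ n) = expMeasure 1) :
    Tendsto
      (fun n => μ n {ω | ∀ π : Fin d → Equiv.Perm (Fin n),
        (n : ℝ) ^ ((2 : ℤ) - d) / 2 ≤
          ∑ i : Fin n,
            C n (fun t : Fin d => if t = (⟨0, by omega⟩ : Fin d) then i else π t i) ω})
      atTop (nhds 1) := by
  classical
  have hμ' := hμ
  set B : ℕ → ℝ := fun n => 4 * (Real.exp 1 / 8)^n with hB
  -- the key pointwise bound
  have key : ∀ n : ℕ, 1 ≤ n →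
      1 - ENNReal.ofReal (B n) ≤ μ n {ω | ∀ π : Fin d → Equiv.Perm (Fin n),
        (n : ℝ) ^ ((2 : ℤ) - d) / 2 ≤
          ∑ i : Fin n,
            C n (fun t : Fin d => if t = (⟨0, by omega⟩ : Fin d) then i else π t i) ω} := by
    intro n hn
    haveI := hμ n
    set z : Fin d := ⟨0, by omega⟩ with hz
    set ε : ℝ := (n : ℝ) ^ ((2 : ℤ) - d) / 2 with hε
    set S : (Fin d → Equiv.Perm (Fin n)) → Ω n → ℝ := fun σ ω =>
      ∑ i : Fin n, C n (fun t : Fin d => if t = z then i else σ t i) ω with hS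
    set A : (Fin d → Equiv.Perm (Fin n)) → Set (Ω n) := fun σ => {ω | S σ ω ≤ ε} with hA
    set Φ : (Fin d → Equiv.Perm (Fin n)) → (Fin d → Equiv.Perm (Fin n)) :=
      fun σ => Function.update σ z 1 with hΦ
    set Q : Finset (Fin d → Equiv.Perm (Fin n)) := Finset.image Φ Finset.univ with hQ
    have hSΦ : ∀ σ, S (Φ σ) = S σ := by
      intro σ
      funext ω
      apply Finset.sum_congr rfl
      intro i _
      congr 1
      funext t
      by_cases ht : t = z
      · simp [ht]
      · simp [ht, hΦ, Function.update_of_ne ht]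
    -- complement covered by union over Q
    have hcover : {ω | ∀ π : Fin d → Equiv.Perm (Fin n), ε ≤ S π ω}ᶜ ⊆ ⋃ σ ∈ Q, A σ := by
      intro ω hω
      simp only [Set.mem_compl_iff, Set.mem_setOf_eq, not_forall] at hω
      obtain ⟨π, hπ⟩ := hω
      refine Set.mem_biUnion (Finset.mem_image.2 ⟨π, Finset.mem_univ _, rfl⟩) ?_
      simp only [hA, Set.mem_setOf_eq, hSΦ]
      linarith [lt_of_not_ge hπ]
    -- card bound
    have hQcard : (Q.card : ℝ) ≤ ((n.factorial : ℝ))^(d-1) := by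
      have hinj : Set.InjOn (fun σ : Fin d → Equiv.Perm (Fin n) =>
          (fun i : {i : Fin d // i ≠ z} => σ i.1)) Q := by
        intro σ hσ τ hτ hfn
        obtain ⟨σ0, _, rfl⟩ := Finset.mem_image.1 hσ
        obtain ⟨τ0, _, rfl⟩ := Finset.mem_image.1 hτ
        funext t
        by_cases ht : t = z
        · subst ht
          simp [hΦ]
        · exact congrFun hfn ⟨t, ht⟩
      have hle := Finset.card_le_card_of_injOn _ (fun σ _ => Finset.mem_univ _) hinj
      have hcard : (Finset.univ : Finset ({i : Fin d // i ≠ z} → Equiv.Perm (Fin n))).card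
          = (n.factorial)^(d-1) := by
        rw [Finset.card_univ, Fintype.card_fun]
        congr 1
        · rw [Fintype.card_perm, Fintype.card_fin]
        · simp [Fintype.card_subtype_compl]
      rw [hcard] at hle
      calc (Q.card : ℝ) ≤ ((n.factorial ^ (d-1) : ℕ) : ℝ) := by exact_mod_cast hle
        _ = ((n.factorial : ℝ))^(d-1) := by push_cast; ring
    -- union bound
    have hA_bound : ∀ σ ∈ Q, μ n (A σ) ≤ ENNReal.ofReal (Real.exp n * ((2 * (n:ℝ)^(d-1))⁻¹)^n) := by
      intro σ _
      exact chernoffStep d hd (μ n) n hn (C n) (hCmeas n) (hCindep n) (hCexp n) σ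
    have hunion : μ n ({ω | ∀ π : Fin d → Equiv.Perm (Fin n), ε ≤ S π ω}ᶜ)
        ≤ ENNReal.ofReal (B n) := by
      refine le_trans (measure_mono hcover) ?_
      refine le_trans (measure_biUnion_finset_le Q A) ?_
      calc ∑ σ ∈ Q, μ n (A σ)
          ≤ ∑ _σ ∈ Q, ENNReal.ofReal (Real.exp n * ((2 * (n:ℝ)^(d-1))⁻¹)^n) :=
            Finset.sum_le_sum hA_bound
        _ = (Q.card : ℝ≥0∞) * ENNReal.ofReal (Real.exp n * ((2 * (n:ℝ)^(d-1))⁻¹)^n) := by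
            rw [Finset.sum_const, nsmul_eq_mul]
        _ = ENNReal.ofReal ((Q.card : ℝ) * (Real.exp n * ((2 * (n:ℝ)^(d-1))⁻¹)^n)) := by
            rw [← ENNReal.ofReal_natCast, ← ENNReal.ofReal_mul (Nat.cast_nonneg _)]
        _ ≤ ENNReal.ofReal (B n) := by
            apply ENNReal.ofReal_le_ofReal
            calc (Q.card : ℝ) * (Real.exp n * ((2 * (n:ℝ)^(d-1))⁻¹)^n)
                ≤ ((n.factorial : ℝ))^(d-1) * (Real.exp n * ((2 * (n:ℝ)^(d-1))⁻¹)^n) := by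
                  apply mul_le_mul_of_nonneg_right hQcard
                  have h1 : (0:ℝ) ≤ Real.exp n := (Real.exp_pos _).le
                  have h2 : (0:ℝ) ≤ ((2 * (n:ℝ)^(d-1))⁻¹)^n := by positivity
                  exact mul_nonneg h1 h2
              _ = ((n.factorial : ℝ))^(d-1) * Real.exp n * ((2 * (n:ℝ)^(d-1))⁻¹)^n := by ring
              _ ≤ B n := bBound d n hd hn
    -- conclude
    have h1 : (1 : ℝ≥0∞) ≤ μ n {ω | ∀ π : Fin d → Equiv.Perm (Fin n), ε ≤ S π ω}
        + μ n ({ω | ∀ π : Fin d → Equiv.Perm (Fin n), ε ≤ S π ω}ᶜ) := by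
      rw [← measure_univ (μ := μ n), ← Set.union_compl_self
        {ω | ∀ π : Fin d → Equiv.Perm (Fin n), ε ≤ S π ω}]
      exact measure_union_le _ _
    have : 1 - ENNReal.ofReal (B n) ≤ μ n {ω | ∀ π : Fin d → Equiv.Perm (Fin n), ε ≤ S π ω} := by
      rw [tsub_le_iff_right]
      exact h1.trans (add_le_add_right hunion _)
    exact this
  -- limits
  have hlt1 : Real.exp 1 / 8 < 1 := by
    have := Real.exp_one_lt_d9
    rw [div_lt_one (by norm_num)]
    linarith
  have hge0 : (0:ℝ) ≤ Real.exp 1 / 8 := by positivity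
  have hBto0 : Tendsto B atTop (nhds 0) := by
    have := (tendsto_pow_atTop_nhds_zero_of_lt_one hge0 hlt1).const_mul (4:ℝ)
    simpa using this
  have hlow : Tendsto (fun n => 1 - ENNReal.ofReal (B n)) atTop (nhds 1) := by
    have h2 : Tendsto (fun n => ENNReal.ofReal (B n)) atTop (nhds 0) := by
      rw [show (0:ℝ≥0∞) = ENNReal.ofReal 0 by simp]
      exact (ENNReal.continuous_ofReal.tendsto 0).comp hBto0
    have h3 := ENNReal.Tendsto.sub (tendsto_const_nhds (x := (1:ℝ≥0∞))) h2
      (Or.inl (by norm_num))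
    simpa using h3
  refine tendsto_of_tendsto_of_tendsto_of_le_of_le' hlow tendsto_const_nhds ?_ ?_
  · filter_upwards [eventually_ge_atTop 1] with n hn
    exact key n hn
  · filter_upwards with n
    exact prob_le_one
end

section
/- Fix θ ∈ (0,1). For each n, let n_1 = n − ⌈n^{1−θ}⌉, and let Y_1, …, Y_{n_1} be independent random variables where Y_i is exponential with rate (n−i+1)^2. Then P( Σ_{i=1}^{n_1} Y_i ≤ 2 n^{θ−1} ) → 1 as n → ∞. -/
open MeasureTheory ProbabilityTheory Filter Finset Real Set Topology
open scoped ENNReal NNReal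

lemma aux_exponentialPDFReal_eq (r x : ℝ) :
    exponentialPDFReal r x = if 0 ≤ x then r * Real.exp (-(r * x)) else 0 := by
  rw [exponentialPDFReal, gammaPDFReal]
  simp [Real.Gamma_one]

lemma aux_expMeasure_eq (r : ℝ) :
    expMeasure r = volume.withDensity (fun x => ((exponentialPDFReal r x).toNNReal : ℝ≥0∞)) := rfl

lemma aux_integrableOn (r : ℝ) (hr : 0 < r) (p : ℕ) :
    IntegrableOn (fun x : ℝ => r * Real.exp (-(r * x)) * x ^ p) (Set.Ioi 0) := by
  have h := integrableOn_rpow_mul_exp_neg_mul_rpow (s := (p:ℝ)) (p := 1) (b := r)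
    (lt_of_lt_of_le (by norm_num) (Nat.cast_nonneg p)) one_pos hr
  have h2 : IntegrableOn (fun x : ℝ => r * (x ^ (p:ℝ) * Real.exp (-r * x ^ (1:ℝ))))
      (Set.Ioi 0) := h.const_mul r
  refine h2.congr_fun (fun x hx => ?_) measurableSet_Ioi
  beta_reduce
  rw [Real.rpow_one, Real.rpow_natCast]
  ring_nf

lemma aux_moment (r : ℝ) (hr : 0 < r) (p : ℕ) :
    Integrable (fun x : ℝ => x ^ p) (expMeasure r) ∧
    ∫ x, x ^ p ∂(expMeasure r) = p.factorial / r ^ p := by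
  have hmeas : Measurable fun x : ℝ => (exponentialPDFReal r x).toNNReal :=
    (measurable_exponentialPDFReal r).real_toNNReal
  have hpt : (fun x : ℝ => ((exponentialPDFReal r x).toNNReal : ℝ) • (x ^ p))
      = Set.indicator (Set.Ici 0) (fun x => r * Real.exp (-(r * x)) * x ^ p) := by
    funext x
    rw [smul_eq_mul, Real.coe_toNNReal _ (exponentialPDFReal_nonneg hr x),
      aux_exponentialPDFReal_eq, Set.indicator_apply]
    by_cases hx : (0:ℝ) ≤ x <;> simp [hx, Set.mem_Ici]
  have hind : Integrable
      (Set.indicator (Set.Ici 0) (fun x => r * Real.exp (-(r * x)) * x ^ p)) volume := by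
    rw [integrable_indicator_iff measurableSet_Ici]
    exact Iff.mpr integrableOn_Ici_iff_integrableOn_Ioi (aux_integrableOn r hr p)
  constructor
  · rw [aux_expMeasure_eq, integrable_withDensity_iff_integrable_smul hmeas]
    simpa [NNReal.smul_def] using hpt ▸ hind
  · rw [aux_expMeasure_eq, integral_withDensity_eq_integral_smul hmeas]
    have : ∫ x : ℝ, ((exponentialPDFReal r x).toNNReal : ℝ≥0) • (x ^ p) ∂volume
        = ∫ x : ℝ, ((exponentialPDFReal r x).toNNReal : ℝ) • (x ^ p) ∂volume := rfl
    rw [this, hpt, integral_indicator measurableSet_Ici, integral_Ici_eq_integral_Ioi]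
    have hres : ∫ x in Set.Ioi (0:ℝ), r * Real.exp (-(r * x)) * x ^ p
        = r * ∫ x in Set.Ioi (0:ℝ), x ^ (((p:ℝ)+1) - 1) * Real.exp (-(r * x)) := by
      rw [← integral_const_mul]
      refine setIntegral_congr_fun measurableSet_Ioi (fun x hx => ?_)
      rw [add_sub_cancel_right, Real.rpow_natCast]
      ring
    rw [hres, integral_rpow_mul_exp_neg_mul_Ioi (by positivity) hr]
    rw [show ((p:ℝ) + 1) = ((p+1 : ℕ) : ℝ) by push_cast; ring, Real.rpow_natCast,
      show (((p+1 : ℕ)) : ℝ) = (p:ℝ) + 1 by push_cast; ring,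
      Real.Gamma_nat_eq_factorial]
    field_simp
    rw [show r * (1 / r) ^ (p + 1) * r ^ p = (r * r⁻¹) * (r * r⁻¹) ^ p by ring, mul_inv_cancel₀ hr.ne']
    simp

lemma aux_var {Ω : Type*} [MeasurableSpace Ω] (μ : Measure Ω) [IsProbabilityMeasure μ]
    (X : Ω → ℝ) (hX : Measurable X) (r : ℝ) (hr : 0 < r)
    (hmap : Measure.map X μ = expMeasure r) :
    MemLp X 2 μ ∧ ∫ ω, X ω ∂μ = 1 / r ∧ variance X μ = 1 / r ^ 2 := by
  have hip : ∀ p : ℕ, Integrable (fun ω => X ω ^ p) μ := by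
    intro p
    have h := (aux_moment r hr p).1
    rw [← hmap] at h
    exact (integrable_map_measure ((measurable_id.pow_const p).aestronglyMeasurable) hX.aemeasurable).mp h
  have hint : ∀ p : ℕ, ∫ ω, X ω ^ p ∂μ = p.factorial / r ^ p := by
    intro p
    have h := (aux_moment r hr p).2
    rw [← hmap, integral_map (f := fun x : ℝ => x ^ p) hX.aemeasurable ((measurable_id.pow_const p).aestronglyMeasurable)] at h
    exact h
  have hmem : MemLp X 2 μ :=
    (memLp_two_iff_integrable_sq hX.aestronglyMeasurable).mpr (hip 2)
  have hmean : ∫ ω, X ω ∂μ = 1 / r := by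
    have := hint 1
    simpa using this
  refine ⟨hmem, hmean, ?_⟩
  rw [variance_eq_sub hmem]
  have h2 : ∫ ω, (X ^ 2) ω ∂μ = 2 / r ^ 2 := by
    simpa [Nat.factorial] using hint 2
  rw [h2]
  have : μ[X] = 1 / r := hmean
  rw [this]
  field_simp
  ring

lemma aux_sum_inv_sq {n m N : ℕ} (hm : 1 ≤ m) (hmn : m ≤ n) (hN : N = n - m) :
    ∑ i ∈ range N, (((n - i : ℕ) : ℝ) ^ 2)⁻¹ ≤ (m : ℝ)⁻¹ := by
  have step : ∀ i ∈ range N, (((n - i : ℕ) : ℝ) ^ 2)⁻¹ ≤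
      ((n - (i + 1) : ℕ) : ℝ)⁻¹ - ((n - i : ℕ) : ℝ)⁻¹ := by
    intro i hi
    rw [Finset.mem_range] at hi
    have hia : 2 ≤ n - i := by omega
    have hcast : ((n - (i + 1) : ℕ) : ℝ) = ((n - i : ℕ) : ℝ) - 1 := by
      have h1 : n - (i + 1) = (n - i) - 1 := by omega
      rw [h1, Nat.cast_sub (by omega)]
      norm_num
    set A : ℝ := ((n - i : ℕ) : ℝ) with hA
    have hA2 : (2 : ℝ) ≤ A := by rw [hA]; exact_mod_cast hia
    rw [hcast]
    have key : (A - 1)⁻¹ - A⁻¹ = ((A - 1) * A)⁻¹ := by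
      rw [inv_sub_inv (by linarith) (by linarith), show A - (A - 1) = 1 by ring, one_div]
    rw [key]
    exact inv_anti₀ (by nlinarith) (by nlinarith)
  calc ∑ i ∈ range N, (((n - i : ℕ) : ℝ) ^ 2)⁻¹
      ≤ ∑ i ∈ range N, (((n - (i + 1) : ℕ) : ℝ)⁻¹ - ((n - i : ℕ) : ℝ)⁻¹) :=
        Finset.sum_le_sum step
    _ = ((n - N : ℕ) : ℝ)⁻¹ - ((n - 0 : ℕ) : ℝ)⁻¹ :=
        Finset.sum_range_sub (fun i => ((n - i : ℕ) : ℝ)⁻¹) N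
    _ ≤ (m : ℝ)⁻¹ := by
        have : n - N = m := by omega
        rw [this]
        have : (0:ℝ) ≤ ((n - 0 : ℕ) : ℝ)⁻¹ := by positivity
        linarith

/-- fix `θ ∈ (0,1)`; with `n₁ = n - ⌈n^{1-θ}⌉` and independent random
variables `Y_1, …, Y_{n₁}` where `Y_i` is exponential with rate `(n-i+1)²`
(here `i : Fin n₁` encodes `i+1 ∈ {1,…,n₁}`, giving rate `(n-i)²`), we have
`P(Σ Y_i ≤ 2 n^{θ-1}) → 1` as `n → ∞`. -/
theorem greedy_phase_cost_whp
    (θ : ℝ) (hθ : 0 < θ ∧ θ < 1)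
    (n₁ : ℕ → ℕ) (hn₁ : ∀ n, n₁ n = n - ⌈(n : ℝ) ^ (1 - θ)⌉₊)
    (Ω : ℕ → Type*) (mΩ : ∀ n, MeasurableSpace (Ω n))
    (μ : ∀ n, Measure (Ω n)) (hμ : ∀ n, IsProbabilityMeasure (μ n))
    (Y : ∀ n, Fin (n₁ n) → Ω n → ℝ)
    (hYmeas : ∀ n i, Measurable (Y n i))
    (hYindep : ∀ n, iIndepFun (Y n) (μ n))
    (hYexp : ∀ n, ∀ i : Fin (n₁ n),
      Measure.map (Y n i) (μ n) = expMeasure (((n - (i : ℕ) : ℕ) : ℝ) ^ 2)) :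
    Tendsto
      (fun n => μ n {ω | (∑ i : Fin (n₁ n), Y n i ω) ≤ 2 * (n : ℝ) ^ (θ - 1)})
      atTop (nhds 1) := by
  obtain ⟨hθ0, hθ1⟩ := hθ
  -- lower bound, the key estimate
  have hlb : ∀ n : ℕ, 1 ≤ n →
      1 - ENNReal.ofReal ((n : ℝ) ^ (θ - 1)) ≤
        μ n {ω | (∑ i : Fin (n₁ n), Y n i ω) ≤ 2 * (n : ℝ) ^ (θ - 1)} := by
    intro n hn
    haveI := hμ n
    have hn0 : (0 : ℝ) < n := by exact_mod_cast hn
    have hn1 : (1 : ℝ) ≤ n := by exact_mod_cast hn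
    set m : ℕ := ⌈(n : ℝ) ^ (1 - θ)⌉₊ with hm
    have hm1 : 1 ≤ m := Nat.one_le_iff_ne_zero.mpr (by
      simp only [hm, ne_eq, Nat.ceil_eq_zero, not_le]
      positivity)
    have hmn : m ≤ n := by
      rw [hm, Nat.ceil_le]
      calc (n : ℝ) ^ (1 - θ) ≤ (n : ℝ) ^ (1 : ℝ) :=
            Real.rpow_le_rpow_of_exponent_le hn1 (by linarith)
        _ = n := Real.rpow_one _
    have hN : n₁ n = n - m := hn₁ n
    set t : ℝ := (n : ℝ) ^ (θ - 1) with ht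
    have ht0 : 0 < t := Real.rpow_pos_of_pos hn0 _
    have ht_inv : t = ((n : ℝ) ^ (1 - θ))⁻¹ := by
      rw [ht, show θ - 1 = -(1 - θ) by ring, Real.rpow_neg (le_of_lt hn0)]
    have hmt : (n : ℝ) ^ (1 - θ) ≤ m := Nat.le_ceil _
    have hmr0 : (0 : ℝ) < m := by exact_mod_cast hm1
    have h_inv_m_le_t : (m : ℝ)⁻¹ ≤ t := by
      rw [ht_inv]
      exact inv_anti₀ (by positivity) hmt
    -- per-variable facts
    set r : Fin (n₁ n) → ℝ := fun i => ((n - (i : ℕ) : ℕ) : ℝ) ^ 2 with hrdef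
    have hki : ∀ i : Fin (n₁ n), m + 1 ≤ n - (i : ℕ) := by
      intro i
      have h1 := i.isLt
      omega
    have hr_pos : ∀ i, 0 < r i := by
      intro i
      have : 0 < n - (i : ℕ) := by have := hki i; omega
      have : (0 : ℝ) < ((n - (i : ℕ) : ℕ) : ℝ) := by exact_mod_cast this
      positivity
    have hfacts := fun i : Fin (n₁ n) =>
      aux_var (μ n) (Y n i) (hYmeas n i) (r i) (hr_pos i) (hYexp n i)
    have hmem : ∀ i, MemLp (Y n i) 2 (μ n) := fun i => (hfacts i).1
    -- the sum
    set S : Ω n → ℝ := ∑ i : Fin (n₁ n), Y n i with hS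
    have hSapp : ∀ ω, S ω = ∑ i : Fin (n₁ n), Y n i ω := by
      intro ω; rw [hS]; simp [Finset.sum_apply]
    have hSmem : MemLp S 2 (μ n) := memLp_finset_sum' univ (fun i _ => hmem i)
    have hES : ∫ ω, S ω ∂(μ n) = ∑ i : Fin (n₁ n), 1 / r i := by
      have h1 : ∫ ω, (∑ i : Fin (n₁ n), Y n i ω) ∂(μ n)
          = ∑ i : Fin (n₁ n), ∫ ω, Y n i ω ∂(μ n) :=
        integral_finset_sum univ (fun i _ => (hmem i).integrable one_le_two)
      calc ∫ ω, S ω ∂(μ n) = ∫ ω, (∑ i : Fin (n₁ n), Y n i ω) ∂(μ n) := by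
            apply integral_congr_ae; filter_upwards with ω; exact hSapp ω
        _ = ∑ i : Fin (n₁ n), ∫ ω, Y n i ω ∂(μ n) := h1
        _ = ∑ i : Fin (n₁ n), 1 / r i := by
            exact Finset.sum_congr rfl (fun i _ => (hfacts i).2.1)
    have hVar : variance S (μ n) = ∑ i : Fin (n₁ n), 1 / (r i) ^ 2 := by
      rw [hS, IndepFun.variance_sum (fun i _ => hmem i)
        (fun i _ j _ hij => (hYindep n).indepFun hij)]
      exact Finset.sum_congr rfl (fun i _ => (hfacts i).2.2)
    -- numeric bounds
    have he : (∑ i : Fin (n₁ n), 1 / r i) ≤ (m : ℝ)⁻¹ := by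
      have : (∑ i : Fin (n₁ n), 1 / r i)
          = ∑ i ∈ range (n₁ n), (((n - i : ℕ) : ℝ) ^ 2)⁻¹ := by
        rw [← Fin.sum_univ_eq_sum_range (fun i => (((n - i : ℕ) : ℝ) ^ 2)⁻¹) (n₁ n)]
        exact Finset.sum_congr rfl (fun i _ => by rw [one_div, hrdef])
      rw [this]
      exact aux_sum_inv_sq hm1 hmn hN
    have he_t : (∑ i : Fin (n₁ n), 1 / r i) ≤ t := le_trans he h_inv_m_le_t
    have hrm : ∀ i, (m : ℝ) ^ 2 ≤ r i := by
      intro i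
      have hre : r i = ((n - (i : ℕ) : ℕ) : ℝ) ^ 2 := rfl
      rw [hre]
      have h1 : m ≤ n - (i : ℕ) := le_trans (Nat.le_succ m) (hki i)
      have h2 : (m : ℝ) ≤ ((n - (i : ℕ) : ℕ) : ℝ) := by exact_mod_cast h1
      have h3 : (0:ℝ) ≤ (m:ℝ) := by positivity
      nlinarith
    have hv : (∑ i : Fin (n₁ n), 1 / (r i) ^ 2)
        ≤ ((m : ℝ)⁻¹) ^ 2 * ∑ i : Fin (n₁ n), 1 / r i := by
      rw [Finset.mul_sum]
      refine Finset.sum_le_sum (fun i _ => ?_)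
      have h1 : 0 < r i := hr_pos i
      have hinv : 1 / r i ≤ ((m : ℝ)⁻¹) ^ 2 := by
        rw [one_div, inv_pow]
        exact inv_anti₀ (by positivity) (hrm i)
      calc (1 : ℝ) / (r i) ^ 2 = (1 / r i) * (1 / r i) := by
            rw [one_div, one_div, sq, mul_inv]
        _ ≤ ((m : ℝ)⁻¹) ^ 2 * (1 / r i) :=
            mul_le_mul_of_nonneg_right hinv (by positivity)
    have hvt : variance S (μ n) ≤ t ^ 3 := by
      rw [hVar]
      calc (∑ i : Fin (n₁ n), 1 / (r i) ^ 2)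
          ≤ ((m : ℝ)⁻¹) ^ 2 * ∑ i : Fin (n₁ n), 1 / r i := hv
        _ ≤ ((m : ℝ)⁻¹) ^ 2 * (m : ℝ)⁻¹ := mul_le_mul_of_nonneg_left he (by positivity)
        _ ≤ t ^ 2 * t := by gcongr
        _ = t ^ 3 := by ring
    have hdiv : variance S (μ n) / t ^ 2 ≤ t := by
      rw [div_le_iff₀ (by positivity)]
      calc variance S (μ n) ≤ t ^ 3 := hvt
        _ = t * t ^ 2 := by ring
    -- Chebyshev
    have hcheb := meas_ge_le_variance_div_sq (μ := μ n) hSmem ht0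
    have hsub : {ω | (∑ i : Fin (n₁ n), Y n i ω) ≤ 2 * t}ᶜ ⊆
        {ω | t ≤ |S ω - ∫ x, S x ∂(μ n)|} := by
      intro ω hω
      simp only [Set.mem_compl_iff, Set.mem_setOf_eq, not_le] at hω ⊢
      have hE : ∫ x, S x ∂(μ n) ≤ t := le_trans (le_of_eq hES) he_t
      have h2 : t ≤ S ω - ∫ x, S x ∂(μ n) := by
        rw [hSapp ω]; linarith
      exact le_trans h2 (le_abs_self _)
    have hAm : MeasurableSet {ω | (∑ i : Fin (n₁ n), Y n i ω) ≤ 2 * t} :=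
      measurableSet_le (Finset.measurable_sum univ (fun i _ => hYmeas n i)) measurable_const
    have hAc : μ n {ω | (∑ i : Fin (n₁ n), Y n i ω) ≤ 2 * t}ᶜ ≤ ENNReal.ofReal t :=
      le_trans (measure_mono hsub) (le_trans hcheb (ENNReal.ofReal_le_ofReal hdiv))
    have hAeq : μ n {ω | (∑ i : Fin (n₁ n), Y n i ω) ≤ 2 * t}
        = 1 - μ n {ω | (∑ i : Fin (n₁ n), Y n i ω) ≤ 2 * t}ᶜ := by
      have h := prob_compl_eq_one_sub (μ := μ n) hAm.compl
      rwa [compl_compl] at h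
    rw [hAeq]
    exact tsub_le_tsub_left hAc 1
  -- limits
  have h0 : Tendsto (fun n : ℕ => (n : ℝ) ^ (θ - 1)) atTop (𝓝 0) := by
    have h := (tendsto_rpow_neg_atTop (y := 1 - θ) (by linarith)).comp
      (tendsto_natCast_atTop_atTop (R := ℝ))
    simpa [Function.comp_def, neg_sub] using h
  have h1 : Tendsto (fun n : ℕ => 1 - ENNReal.ofReal ((n : ℝ) ^ (θ - 1))) atTop (𝓝 1) := by
    have h2 : Tendsto (fun n : ℕ => ENNReal.ofReal ((n : ℝ) ^ (θ - 1))) atTop (𝓝 0) := by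
      have := ENNReal.tendsto_ofReal h0
      simpa using this
    have := ENNReal.Tendsto.sub (tendsto_const_nhds (x := (1 : ℝ≥0∞)))
      h2 (Or.inl ENNReal.one_ne_top)
    simpa using this
  refine tendsto_of_tendsto_of_tendsto_of_le_of_le' h1 tendsto_const_nhds ?_ ?_
  · filter_upwards [eventually_ge_atTop 1] with n hn
    exact hlb n hn
  · filter_upwards with n
    haveI := hμ n
    exact prob_le_one
end
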